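/- arXiv:2511.02542 — 5 statements merged into one kernel-verified Lean document; each statement's English description precedes it below -/
import Mathlib

section
/- If every vector of F_2^r (including zero) is a sum of at least ℓ and at most R columns of a parity check matrix of an [n,n-r]_2 code C taken from distinct parts of a partition, then the spherical (R,ℓ)-capsules centered at the codewords of C cover F_2^n. -/
/-- If every vector of F_2^r is a sum of at least ℓ and at most R
columns of a parity check matrix H of a code C, then the spherical
(R,ℓ)-capsules centered at codewords of C cover F_2^n. -/
theorem capsules_cover
    (n r R ℓ : ℕ) (H : Matrix (Fin r) (Fin n) (ZMod 2))
    (hpart : ∀ s : Fin r → ZMod 2, ∃ T : Finset (Fin n),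
        ℓ ≤ T.card ∧ T.card ≤ R ∧ s = ∑ j ∈ T, (fun i => H i j)) :
    ∀ v : Fin n → ZMod 2, ∃ c : Fin n → ZMod 2,
      H.mulVec c = 0 ∧ ℓ ≤ hammingDist v c ∧ hammingDist v c ≤ R := by
  intro v
  obtain ⟨T, hl, hR, hs⟩ := hpart (H.mulVec v)
  refine ⟨fun j => v j + (if j ∈ T then 1 else 0), ?_, ?_, ?_⟩
  · funext i
    have hsi : H.mulVec v i = ∑ j ∈ T, H i j := by
      rw [hs]; simp
    simp only [Matrix.mulVec, dotProduct, mul_add, Finset.sum_add_distrib,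
      mul_ite, mul_one, mul_zero]
    have : ∑ j : Fin n, (if j ∈ T then H i j else 0) = ∑ j ∈ T, H i j := by
      rw [Finset.sum_ite_mem, Finset.univ_inter]
    rw [this]
    have : (∑ j : Fin n, H i j * v j) = H.mulVec v i := rfl
    rw [this, hsi]
    simp [CharTwo.add_self_eq_zero]
  all_goals {
    have hcard : hammingDist v (fun j => v j + (if j ∈ T then 1 else 0)) = T.card := by
      unfold hammingDist
      congr 1
      ext j
      by_cases h : j ∈ T <;> simp [h]
    omega
  }
end

section
/- Suppose H_0 is an r_0×n_0 binary matrix such that every vector of F_2^{r_0} is a sum of at most 2 columns of H_0, with a partition of its columns into p subsets realizing a 2-partition, and let m satisfy 2^m ≥ p. Then the q^m-concatenating Construction QM_2^2 with indicator set B = F_{2^m} and D = D_1(2) produces a binary matrix H_C with r_0 + 2m rows and 2^m(n_0+1) − 1 columns such that every vector of F_2^{r_0+2m} is a sum of at most 2 columns of H_C. -/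
/-- Construction QM_2^2. From an r₀×n₀ binary matrix H₀ whose
columns h admit a 2-partition (coloring `col` into p parts; every vector of
F_2^{r₀} is a sum of ≤ 2 columns from distinct parts), with 2^m ≥ p,
indicator set B = F_{2^m} (β surjective, distinct on distinct parts) and
D = D₁(2), the matrix H_C (columns indexed by (Fin n₀ × K) ⊕ {w ≠ 0}) has
r₀ + 2m rows and 2^m(n₀+1) − 1 columns, and every vector of F_2^{r₀+2m}
is a sum of at most 2 of its columns. -/
theorem QM2_2_construction
    (r0 n0 p m : ℕ) (hm : 1 ≤ m)
    (K : Type) [Field K] [Fintype K] [DecidableEq K] (hK : Fintype.card K = 2 ^ m)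
    (h : Fin n0 → (Fin r0 → ZMod 2)) (col : Fin n0 → Fin p)
    (hcov : ∀ s : Fin r0 → ZMod 2, ∃ T : Finset (Fin n0),
        T.card ≤ 2 ∧ Set.InjOn col ↑T ∧ s = ∑ j ∈ T, h j)
    (hpm : p ≤ 2 ^ m) (hn0 : 2 ^ m ≤ n0)
    (β : Fin n0 → K) (hβsurj : Function.Surjective β)
    (hβ : ∀ i j, col i ≠ col j → β i ≠ β j) :
    Fintype.card ((Fin n0 × K) ⊕ {w : K // w ≠ 0}) = 2 ^ m * (n0 + 1) - 1 ∧
    ∀ u : (Fin r0 → ZMod 2) × K × K,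
      ∃ T : Finset ((Fin n0 × K) ⊕ {w : K // w ≠ 0}),
        T.card ≤ 2 ∧
        u = ∑ i ∈ T, Sum.elim
              (fun jx : Fin n0 × K => (h jx.1, jx.2, β jx.1 * jx.2))
              (fun w : {w : K // w ≠ 0} => ((0 : Fin r0 → ZMod 2), (0 : K), (w : K))) i := by
  -- characteristic 2
  haveI hchar : CharP K 2 := by
    obtain ⟨n, hq, hcard⟩ := FiniteField.card K (ringChar K)
    have hdvd : ringChar K ∣ 2 := by
      refine hq.dvd_of_dvd_pow (n := m) ?_
      rw [← hK, hcard]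
      exact dvd_pow_self _ n.2.ne'
    have : ringChar K = 2 :=
      ((Nat.prime_dvd_prime_iff_eq hq Nat.prime_two).mp hdvd)
    rw [← this]
    exact ringChar.charP K
  have hone : (1 : ℕ) ≤ 2 ^ m := Nat.one_le_two_pow
  constructor
  · have hws : Fintype.card {w : K // w ≠ 0} = 2 ^ m - 1 := by
      rw [Fintype.card_subtype_compl, hK]
      simp
    rw [Fintype.card_sum, Fintype.card_prod, Fintype.card_fin, hK, hws]
    have he : 2 ^ m * (n0 + 1) = n0 * 2 ^ m + 2 ^ m := by ring
    rw [he, Nat.add_sub_assoc hone]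
  · intro u
    obtain ⟨s, x, y⟩ := u
    set F := Sum.elim
              (fun jx : Fin n0 × K => (h jx.1, jx.2, β jx.1 * jx.2))
              (fun w : {w : K // w ≠ 0} => ((0 : Fin r0 → ZMod 2), (0 : K), (w : K))) with hF
    have hself : ∀ v : Fin r0 → ZMod 2, v + v = 0 := by
      intro v; funext i; exact CharTwo.add_self_eq_zero _
    obtain ⟨T, hTc, hTi, hTs⟩ := hcov s
    interval_cases hc : T.card
    · -- T empty : s = 0
      rw [Finset.card_eq_zero] at hc
      subst hc
      simp only [Finset.sum_empty] at hTs
      subst hTs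
      by_cases hx : x = 0
      · by_cases hy : y = 0
        · exact ⟨∅, by simp, by simp [hx, hy]⟩
        · refine ⟨{Sum.inr ⟨y, hy⟩}, by simp, ?_⟩
          simp [hF, hx]
      · obtain ⟨j, hj⟩ := hβsurj (y * x⁻¹)
        have hne : (Sum.inl (j, (0:K)) : (Fin n0 × K) ⊕ {w : K // w ≠ 0}) ≠ Sum.inl (j, x) := by
          simp [Ne.symm hx]
        refine ⟨{Sum.inl (j, 0), Sum.inl (j, x)}, (Finset.card_insert_le _ _).trans (by simp), ?_⟩
        rw [Finset.sum_pair hne]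
        simp only [hF, Sum.elim_inl, Prod.mk_add_mk]
        refine Prod.ext ?_ (Prod.ext ?_ ?_)
        · simp [hself]
        · simp
        · simp only [mul_zero, zero_add, hj]
          field_simp
    · -- T = {j}
      rw [Finset.card_eq_one] at hc
      obtain ⟨j, rfl⟩ := hc
      simp only [Finset.sum_singleton] at hTs
      subst hTs
      by_cases hy : β j * x = y
      · exact ⟨{Sum.inl (j, x)}, by simp, by simp [hF, hy]⟩
      · have hw : y + β j * x ≠ 0 := by
          intro h0
          apply hy
          have h2 := CharTwo.add_self_eq_zero (R := K) (β j * x)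
          linear_combination h2 - h0
        refine ⟨{Sum.inl (j, x), Sum.inr ⟨y + β j * x, hw⟩},
          (Finset.card_insert_le _ _).trans (by simp), ?_⟩
        rw [Finset.sum_pair (by simp)]
        simp only [hF, Sum.elim_inl, Sum.elim_inr, Prod.mk_add_mk]
        refine Prod.ext (by simp) (Prod.ext (by simp) ?_)
        have h2 := CharTwo.add_self_eq_zero (R := K) (β j * x)
        simp only
        linear_combination -h2
    · -- T = {j1, j2}
      rw [Finset.card_eq_two] at hc
      obtain ⟨j1, j2, hj12, rfl⟩ := hc
      rw [Finset.sum_pair hj12] at hTs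
      subst hTs
      have hcol : col j1 ≠ col j2 := fun hcc =>
        hj12 (hTi (by simp) (by simp) hcc)
      have hβne : β j1 ≠ β j2 := hβ _ _ hcol
      have hd : β j1 + β j2 ≠ 0 := by
        intro h0
        apply hβne
        have h2 := CharTwo.add_self_eq_zero (R := K) (β j2)
        linear_combination h0 - h2
      set ξ1 : K := (y + β j2 * x) * (β j1 + β j2)⁻¹ with hξ1
      refine ⟨{Sum.inl (j1, ξ1), Sum.inl (j2, x + ξ1)}, ?_, ?_⟩
      · exact (Finset.card_insert_le _ _).trans (by simp)
      · rw [Finset.sum_pair (by simp [hj12])]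
        simp only [hF, Sum.elim_inl, Prod.mk_add_mk]
        refine Prod.ext rfl (Prod.ext ?_ ?_)
        · simp only
          have h2 := CharTwo.add_self_eq_zero (R := K) ξ1
          linear_combination -h2
        · simp only [hξ1]
          have h1 := CharTwo.add_self_eq_zero (R := K) (β j2 * x)
          have h2 := CharTwo.add_self_eq_zero (R := K)
            (β j2 * ((y + β j2 * x) * (β j1 + β j2)⁻¹))
          have hinv : (β j1 + β j2) * (β j1 + β j2)⁻¹ = 1 := mul_inv_cancel₀ hd
          linear_combination (-(y + β j2 * x)) * hinv - h1
end

section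
/- Suppose H_0 is an r_0×n_0 binary parity check matrix of a code of covering radius 2 and minimum distance 3, with a 2-partition into p subsets, and 2^m ≥ p with m ≥ 2. Then Construction QM_3^2 with indicator set B ⊆ {*} ∪ (F_{2^m} \ {1}) and D = D_6 produces a binary linear code of length 2^m(n_0+2) − 3, codimension r_0 + 2m, minimum distance 3, and covering radius 2. -/
private lemma cover_zero {ι V : Type} [DecidableEq ι] [AddCommMonoid V] (f : ι → V) (u : V)
    (h : u = 0) : ∃ T : Finset ι, T.card ≤ 2 ∧ u = ∑ k ∈ T, f k :=
  ⟨∅, by simp, by simpa using h⟩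

private lemma cover_one {ι V : Type} [DecidableEq ι] [AddCommMonoid V] (f : ι → V) (u : V)
    (i : ι) (h : u = f i) : ∃ T : Finset ι, T.card ≤ 2 ∧ u = ∑ k ∈ T, f k :=
  ⟨{i}, by simp, by simpa using h⟩

private lemma cover_two {ι V : Type} [DecidableEq ι] [AddCommMonoid V] (f : ι → V) (u : V)
    (i j : ι) (hij : i ≠ j) (h : u = f i + f j) :
    ∃ T : Finset ι, T.card ≤ 2 ∧ u = ∑ k ∈ T, f k :=
  ⟨{i, j}, by rw [Finset.card_pair hij], by rw [Finset.sum_pair hij]; exact h⟩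


/-- Construction QM_3^2. From a binary [n₀, n₀−r₀, 3]_2 code of
covering radius 2 with a 2-partition into p parts, 2^m ≥ p, m ≥ 2, indicators in
{*} ∪ (F_{2^m} \ {1}) and D = D₆, one obtains a binary linear code of length
2^m(n₀+2) − 3, codimension r₀ + 2m, minimum distance 3 and covering radius 2. -/
theorem QM3_2_construction
    (r0 n0 p m : ℕ) (hm : 2 ≤ m)
    (K : Type) [Field K] [Fintype K] [DecidableEq K] (hK : Fintype.card K = 2 ^ m)
    (h : Fin n0 → (Fin r0 → ZMod 2))
    (hh0 : ∀ j, h j ≠ 0) (hhinj : Function.Injective h)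
    (hdep : ∃ a b c : Fin n0, a ≠ b ∧ a ≠ c ∧ b ≠ c ∧ h a + h b + h c = 0)
    (col : Fin n0 → Fin p)
    (hcov : ∀ s : Fin r0 → ZMod 2, ∃ T : Finset (Fin n0),
        T.card ≤ 2 ∧ Set.InjOn col ↑T ∧ s = ∑ j ∈ T, h j)
    (hpm : p ≤ 2 ^ m)
    (β : Fin n0 → Option K) (hβ1 : ∀ j, β j ≠ some 1)
    (hβ : ∀ i j, col i ≠ col j → β i ≠ β j)
    (w : K) (hw : w ≠ 0) :
    let V := (Fin r0 → ZMod 2) × K × K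
    let ι := (Fin n0 × K) ⊕ ((Bool × {x : K // x ≠ 0 ∧ x ≠ w}) ⊕ Unit)
    let Hcol : ι → V := Sum.elim
      (fun jx : Fin n0 × K =>
        (β jx.1).elim (h jx.1, (0 : K), jx.2) (fun b => (h jx.1, jx.2, b * jx.2)))
      (Sum.elim
        (fun bx : Bool × {x : K // x ≠ 0 ∧ x ≠ w} =>
          if bx.1 then ((0 : Fin r0 → ZMod 2), (bx.2 : K), (0 : K))
          else ((0 : Fin r0 → ZMod 2), (0 : K), (bx.2 : K)))
        (fun _ : Unit => ((0 : Fin r0 → ZMod 2), w, w)))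
    Fintype.card ι = 2 ^ m * (n0 + 2) - 3 ∧
    (∀ i, Hcol i ≠ 0) ∧
    Function.Injective Hcol ∧
    (∃ i j k : ι, i ≠ j ∧ i ≠ k ∧ j ≠ k ∧ Hcol i + Hcol j + Hcol k = 0) ∧
    (∀ u : V, ∃ T : Finset ι, T.card ≤ 2 ∧ u = ∑ i ∈ T, Hcol i) ∧
    ¬(∀ u : V, ∃ T : Finset ι, T.card ≤ 1 ∧ u = ∑ i ∈ T, Hcol i) := by
  intro V ι Hcol
  have h2K : (2 : K) = 0 := by
    have hc : (Fintype.card K : K) = 0 := FiniteField.cast_card_eq_zero K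
    rw [hK] at hc
    push_cast at hc
    exact pow_eq_zero_iff (by omega : m ≠ 0) |>.mp hc
  have h4 : 4 ≤ 2 ^ m := by
    calc (4:ℕ) = 2 ^ 2 := by norm_num
    _ ≤ 2 ^ m := Nat.pow_le_pow_right (by norm_num) hm
  have hexw : ∃ x : K, x ≠ 0 ∧ x ≠ w := by
    by_contra hx
    push_neg at hx
    have hsub : (Finset.univ : Finset K) ⊆ {0, w} := by
      intro x _
      simp only [Finset.mem_insert, Finset.mem_singleton]
      by_cases h0 : x = 0
      · exact Or.inl h0
      · exact Or.inr (hx x h0)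
    have hle := Finset.card_le_card hsub
    have h2 : ({0, w} : Finset K).card ≤ 2 := Finset.card_insert_le _ _ |>.trans (by simp)
    rw [Finset.card_univ, hK] at hle
    omega
  -- value lemmas
  have HA : ∀ (j : Fin n0) (ξ : K), β j = none →
      Hcol (Sum.inl (j, ξ)) = (h j, (0:K), ξ) := by
    intro j ξ hb; simp only [Hcol, Sum.elim_inl, hb, Option.elim]
  have HB : ∀ (j : Fin n0) (ξ b : K), β j = some b →
      Hcol (Sum.inl (j, ξ)) = (h j, ξ, b * ξ) := by
    intro j ξ b hb; simp only [Hcol, Sum.elim_inl, hb, Option.elim]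
  have HT : ∀ (x : {x : K // x ≠ 0 ∧ x ≠ w}),
      Hcol (Sum.inr (Sum.inl (true, x))) = ((0 : Fin r0 → ZMod 2), (x:K), (0:K)) := by
    intro x; rfl
  have HF : ∀ (x : {x : K // x ≠ 0 ∧ x ≠ w}),
      Hcol (Sum.inr (Sum.inl (false, x))) = ((0 : Fin r0 → ZMod 2), (0:K), (x:K)) := by
    intro x; rfl
  have HU : Hcol (Sum.inr (Sum.inr ())) = ((0 : Fin r0 → ZMod 2), w, w) := by rfl
  have HZ : ∀ (j : Fin n0), Hcol (Sum.inl (j, (0:K))) = (h j, (0:K), (0:K)) := by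
    intro j
    rcases hb : β j with _ | b
    · rw [HA j 0 hb]
    · rw [HB j 0 b hb, mul_zero]
  have hfstA : ∀ (j : Fin n0) (ξ : K), (Hcol (Sum.inl (j, ξ))).1 = h j := by
    intro j ξ
    rcases hb : β j with _ | b
    · rw [HA j ξ hb]
    · rw [HB j ξ b hb]
  have hfst0 : ∀ i2, (Hcol (Sum.inr i2)).1 = (0 : Fin r0 → ZMod 2) := by
    rintro (⟨b, x⟩ | u)
    · cases b
      · rw [HF]
      · rw [HT]
    · cases u; rw [HU]
  have hadd : ∀ (a a' : Fin r0 → ZMod 2) (b b' c c' : K),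
      ((a, b, c) : V) + (a', b', c') = (a + a', b + b', c + c') := fun _ _ _ _ _ _ => rfl
  have mk3 : ∀ (a a' : Fin r0 → ZMod 2) (b b' c c' : K), a = a' → b = b' → c = c' →
      ((a, b, c) : V) = (a', b', c') := by
    rintro a a' b b' c c' rfl rfl rfl; rfl
  -- disequality helpers
  have inlne : ∀ (a b : Fin n0) (ξ ξ' : K), a ≠ b →
      (Sum.inl (a, ξ) : ι) ≠ Sum.inl (b, ξ') := by
    intro a b ξ ξ' hab hh
    apply hab
    injection hh with h'
    exact congrArg Prod.fst h'
  have inlinr : ∀ (x : Fin n0 × K) (y : (Bool × {x : K // x ≠ 0 ∧ x ≠ w}) ⊕ Unit),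
      (Sum.inl x : ι) ≠ Sum.inr y := fun x y hh => Sum.inl_ne_inr hh
  have inrinl : ∀ (y : (Bool × {x : K // x ≠ 0 ∧ x ≠ w}) ⊕ Unit) (x : Fin n0 × K),
      (Sum.inr y : ι) ≠ Sum.inl x := fun y x hh => Sum.inr_ne_inl hh
  have pairne : ∀ (b : Bool) (x1 x2 : {x : K // x ≠ 0 ∧ x ≠ w}), (x1 : K) ≠ (x2 : K) →
      (Sum.inr (Sum.inl (b, x1)) : ι) ≠ Sum.inr (Sum.inl (b, x2)) := by
    intro b x1 x2 hx hh
    apply hx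
    injection hh with h1
    injection h1 with h2
    exact congrArg (fun q : Bool × {x : K // x ≠ 0 ∧ x ≠ w} => (q.2 : K)) h2
  have unitne : ∀ (b : Bool) (x : {x : K // x ≠ 0 ∧ x ≠ w}),
      (Sum.inr (Sum.inr ()) : ι) ≠ Sum.inr (Sum.inl (b, x)) := by
    intro b x hh
    injection hh with h1
    exact Sum.inr_ne_inl h1
  refine ⟨?_, ?_, ?_, ?_, ?_, ?_⟩
  -- 1. cardinality
  · have hcard2 : Fintype.card {x : K // x ≠ 0 ∧ x ≠ w} = 2 ^ m - 2 := by
      rw [Fintype.card_subtype]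
      have he : (Finset.univ.filter fun x : K => x ≠ 0 ∧ x ≠ w) = Finset.univ \ {0, w} := by
        ext x; simp [not_or]
      rw [he, Finset.card_sdiff_of_subset (Finset.subset_univ _), Finset.card_univ, hK]
      congr 1
      rw [Finset.card_insert_of_notMem (by simp [Ne.symm hw]), Finset.card_singleton]
    simp only [ι, Fintype.card_sum, Fintype.card_prod, Fintype.card_bool, Fintype.card_fin,
      Fintype.card_unit, hcard2, hK]
    have hr : 2 ^ m * (n0 + 2) = n0 * 2 ^ m + 2 * 2 ^ m := by ring
    rw [hr, Nat.add_sub_assoc (by omega)]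
    congr 1
    omega
  -- 2. no zero column
  · rintro (⟨j, ξ⟩ | (⟨b, x⟩ | u)) heq
    · apply hh0 j
      have := congrArg Prod.fst heq
      rwa [hfstA] at this
    · cases b
      · rw [HF] at heq
        have hx : (x : K) = 0 := by simpa using congrArg (fun v : V => v.2.2) heq
        exact x.2.1 hx
      · rw [HT] at heq
        have hx : (x : K) = 0 := by simpa using congrArg (fun v : V => v.2.1) heq
        exact x.2.1 hx
    · cases u
      rw [HU] at heq
      have hx : w = 0 := by simpa using congrArg (fun v : V => v.2.1) heq
      exact hw hx
  -- 3. injectivity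
  · rintro (⟨a, ξ⟩ | (⟨b1, x⟩ | u)) (⟨a', ξ'⟩ | (⟨b1', x'⟩ | u')) heq
    · have h1 : h a = h a' := by
        have := congrArg Prod.fst heq
        rwa [hfstA, hfstA] at this
      have haa : a = a' := hhinj h1
      subst haa
      rcases hb : β a with _ | b
      · rw [HA a ξ hb, HA a ξ' hb] at heq
        have : ξ = ξ' := by simpa using congrArg (fun v : V => v.2.2) heq
        rw [this]
      · rw [HB a ξ b hb, HB a ξ' b hb] at heq
        have : ξ = ξ' := by simpa using congrArg (fun v : V => v.2.1) heq
        rw [this]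
    · exfalso
      apply hh0 a
      have := congrArg Prod.fst heq
      rwa [hfstA, hfst0] at this
    · exfalso
      apply hh0 a
      have := congrArg Prod.fst heq
      rwa [hfstA, hfst0] at this
    · exfalso
      apply hh0 a'
      have := (congrArg Prod.fst heq).symm
      rwa [hfstA, hfst0] at this
    · cases b1 <;> cases b1'
      · rw [HF, HF] at heq
        have hx : (x : K) = (x' : K) := by simpa using congrArg (fun v : V => v.2.2) heq
        rw [Subtype.ext hx]
      · rw [HF, HT] at heq
        have hx : (x : K) = 0 := by simpa using congrArg (fun v : V => v.2.2) heq
        exact absurd hx x.2.1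
      · rw [HT, HF] at heq
        have hx : (x : K) = 0 := by simpa using congrArg (fun v : V => v.2.1) heq
        exact absurd hx x.2.1
      · rw [HT, HT] at heq
        have hx : (x : K) = (x' : K) := by simpa using congrArg (fun v : V => v.2.1) heq
        rw [Subtype.ext hx]
    · cases u'
      cases b1
      · rw [HF, HU] at heq
        have hx : (0 : K) = w := by simpa using congrArg (fun v : V => v.2.1) heq
        exact absurd hx.symm hw
      · rw [HT, HU] at heq
        have hx : (0 : K) = w := by simpa using congrArg (fun v : V => v.2.2) heq
        exact absurd hx.symm hw
    · exfalso
      apply hh0 a'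
      have := (congrArg Prod.fst heq).symm
      rwa [hfstA, hfst0] at this
    · cases u
      cases b1'
      · rw [HU, HF] at heq
        have hx : w = 0 := by simpa using congrArg (fun v : V => v.2.1) heq
        exact absurd hx hw
      · rw [HU, HT] at heq
        have hx : w = 0 := by simpa using congrArg (fun v : V => v.2.2) heq
        exact absurd hx hw
    · cases u; cases u'; rfl
  -- 4. three dependent columns
  · obtain ⟨a, b, c, hab, hac, hbc, hsum⟩ := hdep
    refine ⟨Sum.inl (a, 0), Sum.inl (b, 0), Sum.inl (c, 0), inlne a b 0 0 hab,
      inlne a c 0 0 hac, inlne b c 0 0 hbc, ?_⟩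
    rw [HZ, HZ, HZ, hadd, hadd]
    have hz0 : ((0 : Fin r0 → ZMod 2), (0:K), (0:K)) = (0 : V) := rfl
    rw [← hz0]
    exact mk3 _ _ _ _ _ _ hsum (by ring) (by ring)
  -- 5. covering radius ≤ 2
  · rintro ⟨s, y, z⟩
    obtain ⟨T, hTcard, hTinj, hsum⟩ := hcov s
    have hc : T.card = 0 ∨ T.card = 1 ∨ T.card = 2 := by omega
    rcases hc with h0 | h1 | h2
    -- |T| = 0
    · rw [Finset.card_eq_zero.mp h0, Finset.sum_empty] at hsum
      subst hsum
      by_cases hy0 : y = 0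
      · by_cases hz0 : z = 0
        · exact cover_zero Hcol _ (mk3 _ _ _ _ _ _ rfl hy0 hz0)
        · by_cases hzw : z = w
          · obtain ⟨x, hx0, hxw⟩ := hexw
            have hxw0 : x + w ≠ 0 := fun hh => hxw (by linear_combination hh - w * h2K)
            have hxww : x + w ≠ w := fun hh => hx0 (by linear_combination hh)
            refine cover_two Hcol _ (Sum.inr (Sum.inl (false, ⟨x, hx0, hxw⟩)))
              (Sum.inr (Sum.inl (false, ⟨x + w, hxw0, hxww⟩)))
              (pairne _ _ _ (fun hh => hw (by linear_combination -hh))) ?_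
            rw [HF, HF, hadd]
            refine mk3 _ _ _ _ _ _ (by rw [add_zero]) (by rw [hy0, add_zero]) ?_
            rw [hzw]; linear_combination -x * h2K
          · refine cover_one Hcol _ (Sum.inr (Sum.inl (false, ⟨z, hz0, hzw⟩))) ?_
            rw [HF]
            exact mk3 _ _ _ _ _ _ rfl hy0 rfl
      · by_cases hyw : y = w
        · by_cases hzw : z = w
          · refine cover_one Hcol _ (Sum.inr (Sum.inr ())) ?_
            rw [HU]
            exact mk3 _ _ _ _ _ _ rfl hyw hzw
          · by_cases hz0 : z = 0
            · obtain ⟨x, hx0, hxw⟩ := hexw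
              have hxw0 : x + w ≠ 0 := fun hh => hxw (by linear_combination hh - w * h2K)
              have hxww : x + w ≠ w := fun hh => hx0 (by linear_combination hh)
              refine cover_two Hcol _ (Sum.inr (Sum.inl (true, ⟨x, hx0, hxw⟩)))
                (Sum.inr (Sum.inl (true, ⟨x + w, hxw0, hxww⟩)))
                (pairne _ _ _ (fun hh => hw (by linear_combination -hh))) ?_
              rw [HT, HT, hadd]
              refine mk3 _ _ _ _ _ _ (by rw [add_zero]) ?_ (by rw [hz0, add_zero])
              rw [hyw]; linear_combination -x * h2K
            · have hzw0 : z + w ≠ 0 := fun hh => hzw (by linear_combination hh - w * h2K)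
              have hzww : z + w ≠ w := fun hh => hz0 (by linear_combination hh)
              refine cover_two Hcol _ (Sum.inr (Sum.inr ()))
                (Sum.inr (Sum.inl (false, ⟨z + w, hzw0, hzww⟩))) (unitne _ _) ?_
              rw [HU, HF, hadd]
              exact mk3 _ _ _ _ _ _ (by rw [add_zero]) (by rw [hyw, add_zero])
                (by linear_combination -w * h2K)
        · by_cases hz0 : z = 0
          · refine cover_one Hcol _ (Sum.inr (Sum.inl (true, ⟨y, hy0, hyw⟩))) ?_
            rw [HT]
            exact mk3 _ _ _ _ _ _ rfl rfl hz0
          · by_cases hzw : z = w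
            · have hyw0 : y + w ≠ 0 := fun hh => hyw (by linear_combination hh - w * h2K)
              have hyww : y + w ≠ w := fun hh => hy0 (by linear_combination hh)
              refine cover_two Hcol _ (Sum.inr (Sum.inr ()))
                (Sum.inr (Sum.inl (true, ⟨y + w, hyw0, hyww⟩))) (unitne _ _) ?_
              rw [HU, HT, hadd]
              exact mk3 _ _ _ _ _ _ (by rw [add_zero]) (by linear_combination -w * h2K)
                (by rw [hzw, add_zero])
            · refine cover_two Hcol _ (Sum.inr (Sum.inl (true, ⟨y, hy0, hyw⟩)))
                (Sum.inr (Sum.inl (false, ⟨z, hz0, hzw⟩))) ?_ ?_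
              · intro hh
                injection hh with h1
                injection h1 with h2
                exact Bool.noConfusion (congrArg Prod.fst h2)
              · rw [HT, HF, hadd]
                exact mk3 _ _ _ _ _ _ (by rw [add_zero]) (by rw [add_zero]) (by rw [zero_add])
    -- |T| = 1
    · obtain ⟨j, hj⟩ := Finset.card_eq_one.mp h1
      rw [hj, Finset.sum_singleton] at hsum
      subst hsum
      rcases hb : β j with _ | b
      · by_cases hy0 : y = 0
        · refine cover_one Hcol _ (Sum.inl (j, z)) ?_
          rw [HA j z hb]
          exact mk3 _ _ _ _ _ _ rfl hy0 rfl
        · by_cases hyw : y = w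
          · refine cover_two Hcol _ (Sum.inl (j, z + w)) (Sum.inr (Sum.inr ()))
              (inlinr _ _) ?_
            rw [HA j (z + w) hb, HU, hadd]
            exact mk3 _ _ _ _ _ _ (by rw [add_zero]) (by rw [hyw, zero_add])
              (by linear_combination -w * h2K)
          · refine cover_two Hcol _ (Sum.inl (j, z))
              (Sum.inr (Sum.inl (true, ⟨y, hy0, hyw⟩))) (inlinr _ _) ?_
            rw [HA j z hb, HT, hadd]
            exact mk3 _ _ _ _ _ _ (by rw [add_zero]) (by rw [zero_add]) (by rw [add_zero])
      · have hb1 : b ≠ 1 := fun hh => hβ1 j (by rw [hb, hh])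
        by_cases hzy : z = b * y
        · refine cover_one Hcol _ (Sum.inl (j, y)) ?_
          rw [HB j y b hb]
          exact mk3 _ _ _ _ _ _ rfl rfl hzy
        · by_cases hzw : z + b * y = w
          · by_cases hb0 : b = 0
            · refine cover_two Hcol _ (Sum.inl (j, y + w)) (Sum.inr (Sum.inr ()))
                (inlinr _ _) ?_
              rw [HB j (y + w) b hb, HU, hadd]
              exact mk3 _ _ _ _ _ _ (by rw [add_zero]) (by linear_combination -w * h2K)
                (by linear_combination hzw + (-2 * y - w) * hb0)
            · have hbinv : b * b⁻¹ = 1 := mul_inv_cancel₀ hb0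
              have hne0 : y + z * b⁻¹ ≠ 0 := by
                intro hh
                exact hw (by linear_combination -hzw + b * hh - z * hbinv)
              have hnew : y + z * b⁻¹ ≠ w := by
                intro hh
                have hbw : b * w = 1 * w := by linear_combination -b * hh + hzw + z * hbinv
                exact hb1 (mul_right_cancel₀ hw hbw)
              refine cover_two Hcol _ (Sum.inl (j, z * b⁻¹))
                (Sum.inr (Sum.inl (true, ⟨y + z * b⁻¹, hne0, hnew⟩))) (inlinr _ _) ?_
              rw [HB j (z * b⁻¹) b hb, HT, hadd]
              exact mk3 _ _ _ _ _ _ (by rw [add_zero])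
                (by linear_combination (-(z * b⁻¹)) * h2K) (by linear_combination (-z) * hbinv)
          · have hne0 : z + b * y ≠ 0 := by
              intro hh
              exact hzy (by linear_combination hh - b * y * h2K)
            refine cover_two Hcol _ (Sum.inl (j, y))
              (Sum.inr (Sum.inl (false, ⟨z + b * y, hne0, hzw⟩))) (inlinr _ _) ?_
            rw [HB j y b hb, HF, hadd]
            exact mk3 _ _ _ _ _ _ (by rw [add_zero]) (by rw [add_zero])
              (by linear_combination (-(b * y)) * h2K)
    -- |T| = 2
    · obtain ⟨a, c, hac, hT⟩ := Finset.card_eq_two.mp h2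
      rw [hT, Finset.sum_pair hac] at hsum
      subst hsum
      have hcolne : col a ≠ col c := by
        intro hcc
        exact hac (hTinj (by simp [hT]) (by simp [hT]) hcc)
      have hβne : β a ≠ β c := hβ a c hcolne
      rcases hba : β a with _ | d <;> rcases hbc : β c with _ | e
      · exact absurd (hba.trans hbc.symm) hβne
      · refine cover_two Hcol _ (Sum.inl (a, z + e * y)) (Sum.inl (c, y))
          (inlne a c _ _ hac) ?_
        rw [HA a (z + e * y) hba, HB c y e hbc, hadd]
        exact mk3 _ _ _ _ _ _ rfl (by rw [zero_add]) (by linear_combination (-(e * y)) * h2K)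
      · refine cover_two Hcol _ (Sum.inl (a, y)) (Sum.inl (c, z + d * y))
          (inlne a c _ _ hac) ?_
        rw [HB a y d hba, HA c (z + d * y) hbc, hadd]
        exact mk3 _ _ _ _ _ _ rfl (by rw [add_zero]) (by linear_combination (-(d * y)) * h2K)
      · have hde : d ≠ e := fun hh => hβne (by rw [hba, hbc, hh])
        have hde0 : d + e ≠ 0 := by
          intro hh
          exact hde (by linear_combination hh - e * h2K)
        have hinv : (d + e) * (d + e)⁻¹ = 1 := mul_inv_cancel₀ hde0
        refine cover_two Hcol _ (Sum.inl (a, y + (z + d * y) * (d + e)⁻¹))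
          (Sum.inl (c, (z + d * y) * (d + e)⁻¹)) (inlne a c _ _ hac) ?_
        rw [HB a _ d hba, HB c _ e hbc, hadd]
        exact mk3 _ _ _ _ _ _ rfl
          (by linear_combination (-((z + d * y) * (d + e)⁻¹)) * h2K)
          (by linear_combination (-(z + d * y)) * hinv + (-(d * y)) * h2K)
  -- 6. covering radius > 1
  · intro hall
    obtain ⟨T, hTcard, hsum⟩ := hall ((0 : Fin r0 → ZMod 2), w, (0 : K))
    have hc : T.card = 0 ∨ T.card = 1 := by omega
    rcases hc with h0 | h1
    · rw [Finset.card_eq_zero.mp h0, Finset.sum_empty] at hsum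
      have hx : w = 0 := by simpa using congrArg (fun v : V => v.2.1) hsum
      exact hw hx
    · obtain ⟨i, hi⟩ := Finset.card_eq_one.mp h1
      rw [hi, Finset.sum_singleton] at hsum
      rcases i with ⟨j, ξ⟩ | (⟨b, x⟩ | u)
      · apply hh0 j
        have := congrArg Prod.fst hsum
        rw [hfstA] at this
        exact this.symm
      · cases b
        · rw [HF] at hsum
          have hx : w = 0 := by simpa using congrArg (fun v : V => v.2.1) hsum
          exact hw hx
        · rw [HT] at hsum
          have hx : w = (x : K) := by simpa using congrArg (fun v : V => v.2.1) hsum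
          exact x.2.2 hx.symm
      · cases u
        rw [HU] at hsum
        have hx : (0 : K) = w := by simpa using congrArg (fun v : V => v.2.2) hsum
        exact hw hx.symm
end

section
/- Let H_0 be an r_0×n_0 binary matrix such that every vector of F_2^{r_0} is a sum of at most 3 columns of H_0 from pairwise distinct parts of a given (3,0)-partition into p_0 parts, and let H' be a 2m×n' binary matrix such that every vector of F_2^{2m} is a sum of at most 2 columns of H'. If 2^m − 1 ≥ p_0 and m ≥ 2, then Construction QM_5^3 with D = D_4 and indicators in F_{2^m}^* produces an (r_0+3m)-row matrix with 2^m(n_0+1) + n' − 1 columns such that every vector of F_2^{r_0+3m} is a sum of at most 3 of its columns; hence the corresponding binary code has covering radius at most 3, codimension r_0+3m and length 2^m(n_0+1)+n'−1. -/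
lemma QM5_card_le_two' {α} [DecidableEq α] (x y : α) : ({x, y} : Finset α).card ≤ 2 :=
  (Finset.card_insert_le _ _).trans (by simp)

lemma QM5_card_le_three' {α} [DecidableEq α] (x y z : α) : ({x, y, z} : Finset α).card ≤ 3 :=
  (Finset.card_insert_le _ _).trans (Nat.succ_le_succ (QM5_card_le_two' _ _))

/-- Construction QM_5^3. From H₀ (columns h) with a
(3,0)-partition into p₀ parts, an auxiliary matrix H' (columns h' in
F_2^{2m} ≅ K × K) of covering radius 2, with 2^m − 1 ≥ p₀ and m ≥ 2, nonzero
indicators β distinct on distinct parts and D = D₄, one obtains an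
(r₀+3m)-row matrix with 2^m(n₀+1) + n' − 1 columns such that every vector of
F_2^{r₀+3m} is a sum of at most 3 of its columns (covering radius ≤ 3). -/
theorem QM5_3_construction
    (r0 n0 n' p0 m : ℕ) (hm : 2 ≤ m)
    (K : Type) [Field K] [Fintype K] [DecidableEq K] (hK : Fintype.card K = 2 ^ m)
    (h : Fin n0 → (Fin r0 → ZMod 2)) (col : Fin n0 → Fin p0)
    (hcov : ∀ s : Fin r0 → ZMod 2, ∃ T : Finset (Fin n0),
        T.card ≤ 3 ∧ Set.InjOn col ↑T ∧ s = ∑ j ∈ T, h j)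
    (h' : Fin n' → K × K)
    (h'cov : ∀ u : K × K, ∃ T : Finset (Fin n'), T.card ≤ 2 ∧ u = ∑ j ∈ T, h' j)
    (hp : p0 ≤ 2 ^ m - 1)
    (β : Fin n0 → K) (hβ0 : ∀ j, β j ≠ 0)
    (hβ : ∀ i j, col i ≠ col j → β i ≠ β j) :
    Fintype.card ((Fin n0 × K) ⊕ ({w : K // w ≠ 0} ⊕ Fin n'))
        = 2 ^ m * (n0 + 1) + n' - 1 ∧
    ∀ u : (Fin r0 → ZMod 2) × K × K × K,
      ∃ T : Finset ((Fin n0 × K) ⊕ ({w : K // w ≠ 0} ⊕ Fin n')),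
        T.card ≤ 3 ∧
        u = ∑ i ∈ T, Sum.elim
              (fun jx : Fin n0 × K =>
                (h jx.1, jx.2, β jx.1 * jx.2, β jx.1 ^ 2 * jx.2))
              (Sum.elim
                (fun w : {w : K // w ≠ 0} =>
                  ((0 : Fin r0 → ZMod 2), (w : K), (0 : K), (0 : K)))
                (fun j : Fin n' =>
                  ((0 : Fin r0 → ZMod 2), (0 : K), (h' j).1, (h' j).2))) i := by
  classical
  constructor
  · have h1 : Fintype.card {w : K // w ≠ 0} = 2 ^ m - 1 := by
      simp [Fintype.card_subtype_compl, hK]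
    have h2 : 1 ≤ 2 ^ m := Nat.one_le_two_pow
    simp [Fintype.card_sum, Fintype.card_prod, hK, h1]
    ring_nf
    omega
  · rintro ⟨s, a, b, c⟩
    obtain ⟨T, hT3, hTinj, hTs⟩ := hcov s
    have himg : ∀ (T'' : Finset (Fin n')),
        (∑ i ∈ T''.image (fun j => (Sum.inr (Sum.inr j) :
            (Fin n0 × K) ⊕ ({w : K // w ≠ 0} ⊕ Fin n'))), Sum.elim
              (fun jx : Fin n0 × K =>
                (h jx.1, jx.2, β jx.1 * jx.2, β jx.1 ^ 2 * jx.2))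
              (Sum.elim
                (fun w : {w : K // w ≠ 0} =>
                  ((0 : Fin r0 → ZMod 2), (w : K), (0 : K), (0 : K)))
                (fun j : Fin n' =>
                  ((0 : Fin r0 → ZMod 2), (0 : K), (h' j).1, (h' j).2))) i)
          = ((0 : Fin r0 → ZMod 2), (0 : K), (∑ j ∈ T'', (h' j).1),
              ∑ j ∈ T'', (h' j).2) := by
      intro T''
      rw [Finset.sum_image (by intro x _ y _ hxy; simpa using hxy)]
      rw [Prod.ext_iff, Prod.ext_iff, Prod.ext_iff]
      simp [Prod.fst_sum, Prod.snd_sum]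
    have hcases : T.card = 0 ∨ T.card = 1 ∨ T.card = 2 ∨ T.card = 3 := by omega
    rcases hcases with hc | hc | hc | hc
    · -- card 0
      rw [Finset.card_eq_zero] at hc
      subst hc
      simp only [Finset.sum_empty] at hTs
      obtain ⟨T'', hT2, hTsum⟩ := h'cov (b, c)
      have hb' : b = ∑ i ∈ T'', (h' i).1 := by
        have := congrArg Prod.fst hTsum; simpa [Prod.fst_sum] using this
      have hc' : c = ∑ i ∈ T'', (h' i).2 := by
        have := congrArg Prod.snd hTsum; simpa [Prod.snd_sum] using this
      by_cases ha : a = 0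
      · refine ⟨T''.image (fun j => Sum.inr (Sum.inr j)), ?_, ?_⟩
        · exact (Finset.card_image_le).trans (hT2.trans (by norm_num))
        · rw [himg]
          simp [hTs, ha, hb', hc']
      · refine ⟨insert (Sum.inr (Sum.inl ⟨a, ha⟩))
            (T''.image (fun j => Sum.inr (Sum.inr j))), ?_, ?_⟩
        · exact (Finset.card_insert_le _ _).trans
            (Nat.succ_le_succ ((Finset.card_image_le).trans hT2))
        · rw [Finset.sum_insert (by simp), himg]
          simp only [Sum.elim_inr, Sum.elim_inl, Prod.mk_add_mk, Prod.mk.injEq]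
          exact ⟨by simp [hTs], by simp, by simp [hb'], by simp [hc']⟩
    · -- card 1
      obtain ⟨j, rfl⟩ := Finset.card_eq_one.mp hc
      simp only [Finset.sum_singleton] at hTs
      obtain ⟨T'', hT2, hTsum⟩ := h'cov (b - β j * a, c - β j ^ 2 * a)
      have hb' : b - β j * a = ∑ i ∈ T'', (h' i).1 := by
        have := congrArg Prod.fst hTsum; simpa [Prod.fst_sum] using this
      have hc' : c - β j ^ 2 * a = ∑ i ∈ T'', (h' i).2 := by
        have := congrArg Prod.snd hTsum; simpa [Prod.snd_sum] using this
      refine ⟨insert (Sum.inl (j, a)) (T''.image (fun i => Sum.inr (Sum.inr i))), ?_, ?_⟩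
      · exact (Finset.card_insert_le _ _).trans
          (Nat.succ_le_succ ((Finset.card_image_le).trans hT2))
      · rw [Finset.sum_insert (by simp), himg]
        simp only [Sum.elim_inl, Prod.mk_add_mk, Prod.mk.injEq]
        exact ⟨by simp [hTs], by simp, by linear_combination hb', by linear_combination hc'⟩
    · -- card 2
      obtain ⟨j1, j2, h12, rfl⟩ := Finset.card_eq_two.mp hc
      rw [Finset.sum_pair h12] at hTs
      have hb12 : β j1 ≠ β j2 := by
        apply hβ
        intro hcol
        exact h12 (hTinj (by simp) (by simp) hcol)
      have d12 : β j1 - β j2 ≠ 0 := sub_ne_zero.mpr hb12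
      have d21 : β j2 - β j1 ≠ 0 := sub_ne_zero.mpr hb12.symm
      have e1 : β j1 * (β j1 - β j2) ≠ 0 := mul_ne_zero (hβ0 j1) d12
      have e2 : β j2 * (β j2 - β j1) ≠ 0 := mul_ne_zero (hβ0 j2) d21
      set ξ1 := (c - β j2 * b) / (β j1 * (β j1 - β j2)) with hξ1
      set ξ2 := (c - β j1 * b) / (β j2 * (β j2 - β j1)) with hξ2
      have key3 : b = β j1 * ξ1 + β j2 * ξ2 := by
        rw [hξ1, hξ2]; field_simp [e1, e2, hβ0 j1, hβ0 j2, d12, d21]; ring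
      have key4 : c = β j1 ^ 2 * ξ1 + β j2 ^ 2 * ξ2 := by
        rw [hξ1, hξ2]; field_simp [e1, e2, hβ0 j1, hβ0 j2, d12, d21]; ring
      by_cases hw : a - ξ1 - ξ2 = 0
      · refine ⟨{Sum.inl (j1, ξ1), Sum.inl (j2, ξ2)}, (QM5_card_le_two' _ _).trans (by norm_num), ?_⟩
        rw [Finset.sum_pair (by simp [h12])]
        simp only [Sum.elim_inl, Prod.mk_add_mk, Prod.mk.injEq]
        exact ⟨hTs, by linear_combination hw, key3, key4⟩
      · refine ⟨insert (Sum.inr (Sum.inl ⟨a - ξ1 - ξ2, hw⟩))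
            {Sum.inl (j1, ξ1), Sum.inl (j2, ξ2)}, QM5_card_le_three' _ _ _, ?_⟩
        rw [Finset.sum_insert (by simp), Finset.sum_pair (by simp [h12])]
        simp only [Sum.elim_inl, Sum.elim_inr, Prod.mk_add_mk, Prod.mk.injEq]
        refine ⟨by simp [hTs], ?_, by linear_combination key3, by linear_combination key4⟩
        show a = (a - ξ1 - ξ2) + (ξ1 + ξ2)
        ring
    · -- card 3
      obtain ⟨j1, j2, j3, h12, h13, h23, rfl⟩ := Finset.card_eq_three.mp hc
      rw [Finset.sum_insert (by simp [h12, h13]), Finset.sum_pair h23] at hTs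
      have hbne : ∀ i j : Fin n0, i ∈ ({j1, j2, j3} : Finset (Fin n0)) →
          j ∈ ({j1, j2, j3} : Finset (Fin n0)) → i ≠ j → β i ≠ β j := by
        intro i j hi hj hij
        apply hβ
        intro hcol
        exact hij (hTinj (by simpa using hi) (by simpa using hj) hcol)
      have hb12 := hbne j1 j2 (by simp) (by simp) h12
      have hb13 := hbne j1 j3 (by simp) (by simp) h13
      have hb23 := hbne j2 j3 (by simp) (by simp) h23
      have d12 : β j1 - β j2 ≠ 0 := sub_ne_zero.mpr hb12
      have d13 : β j1 - β j3 ≠ 0 := sub_ne_zero.mpr hb13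
      have d21 : β j2 - β j1 ≠ 0 := sub_ne_zero.mpr hb12.symm
      have d23 : β j2 - β j3 ≠ 0 := sub_ne_zero.mpr hb23
      have d31 : β j3 - β j1 ≠ 0 := sub_ne_zero.mpr hb13.symm
      have d32 : β j3 - β j2 ≠ 0 := sub_ne_zero.mpr hb23.symm
      have e1 := mul_ne_zero d12 d13
      have e2 := mul_ne_zero d21 d23
      have e3 := mul_ne_zero d31 d32
      set ξ1 := (c - (β j2 + β j3) * b + β j2 * β j3 * a) / ((β j1 - β j2) * (β j1 - β j3)) with hξ1
      set ξ2 := (c - (β j1 + β j3) * b + β j1 * β j3 * a) / ((β j2 - β j1) * (β j2 - β j3)) with hξ2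
      set ξ3 := (c - (β j1 + β j2) * b + β j1 * β j2 * a) / ((β j3 - β j1) * (β j3 - β j2)) with hξ3
      refine ⟨{Sum.inl (j1, ξ1), Sum.inl (j2, ξ2), Sum.inl (j3, ξ3)},
        QM5_card_le_three' _ _ _, ?_⟩
      rw [Finset.sum_insert (by simp [h12, h13]), Finset.sum_pair (by simp [h23])]
      simp only [Sum.elim_inl, Prod.mk_add_mk, Prod.mk.injEq]
      refine ⟨hTs, ?_, ?_, ?_⟩
      · rw [hξ1, hξ2, hξ3]; field_simp [e1, e2, e3]; ring
      · rw [hξ1, hξ2, hξ3]; field_simp [e1, e2, e3]; ring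
      · rw [hξ1, hξ2, hξ3]; field_simp [e1, e2, e3]; ring
end

section
/- Let H_0 be an r_0×n_0 binary matrix admitting a (4,1)-partition into p parts (every vector of F_2^{r_0}, including zero, is a sum of at least 1 and at most 4 columns of H_0 from distinct parts), let m be odd with 2^m − 1 ≥ p, and let H' be a 2m×n' binary matrix such that every vector of F_2^{2m} is a sum of at most 2 columns of H'. Then Construction QM_4^4 with D = D_5 and indicators in F_{2^m}^* produces an (r_0+4m)-row matrix with 2^m(n_0+1)+n'−1 columns such that every vector of F_2^{r_0+4m} is a sum of at most 4 of its columns. -/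
open Finset in
lemma vdm_solve {K : Type} [Field K] [DecidableEq K] {n : ℕ} (γ : Fin n → K)
    (hγ : Function.Injective γ) (v : Fin n → K) :
    ∃ ξ : Fin n → K, ∀ k : Fin n, ∑ j, ξ j * γ j ^ (k : ℕ) = v k := by
  classical
  set M : Matrix (Fin n) (Fin n) K := (Matrix.vandermonde γ).transpose with hM
  have hdet : IsUnit M.det := by
    rw [hM, Matrix.det_transpose, Matrix.det_vandermonde]
    rw [isUnit_iff_ne_zero]
    refine Finset.prod_ne_zero_iff.mpr fun i _ => Finset.prod_ne_zero_iff.mpr fun j hj => ?_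
    exact sub_ne_zero.mpr fun e => absurd (hγ e) (Finset.mem_Ioi.mp hj).ne'
  refine ⟨M⁻¹.mulVec v, fun k => ?_⟩
  have hv : M.mulVec (M⁻¹.mulVec v) = v := by
    rw [Matrix.mulVec_mulVec, Matrix.mul_nonsing_inv _ hdet, Matrix.one_mulVec]
  have := congrFun hv k
  rw [← this]
  simp [Matrix.mulVec, dotProduct, hM, Matrix.vandermonde, Matrix.transpose, mul_comm]

lemma vdm_solve_finset {K : Type} [Field K] [DecidableEq K] {ι : Type} [DecidableEq ι]
    (T : Finset ι) (γ : ι → K) (hγ : Set.InjOn γ ↑T) (v : Fin T.card → K) :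
    ∃ ξ : ι → K, ∀ k : Fin T.card, ∑ j ∈ T, ξ j * γ j ^ (k : ℕ) = v k := by
  classical
  let e := T.equivFin
  have hinj : Function.Injective (fun k : Fin T.card => γ (e.symm k : ι)) := by
    intro x y hxy
    have h1 : (e.symm x : ι) = (e.symm y : ι) := hγ (e.symm x).2 (e.symm y).2 hxy
    have := e.symm.injective (Subtype.ext h1)
    exact this
  obtain ⟨ξ', hξ'⟩ := vdm_solve _ hinj v
  refine ⟨fun j => if hj : j ∈ T then ξ' (e ⟨j, hj⟩) else 0, fun k => ?_⟩
  rw [← hξ' k]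
  rw [← Finset.sum_attach T (fun j => (if hj : j ∈ T then ξ' (e ⟨j, hj⟩) else 0) * γ j ^ (k : ℕ))]
  rw [← Equiv.sum_comp e (fun j => ξ' j * γ (e.symm j : ι) ^ (k : ℕ)), Finset.univ_eq_attach]
  refine Finset.sum_congr rfl fun x _ => ?_
  simp only [dif_pos x.2, Equiv.symm_apply_apply]

lemma not_three_dvd {m : ℕ} (hodd : Odd m) : ¬ (3 ∣ 2 ^ m - 1) := by
  obtain ⟨l, rfl⟩ := hodd
  have h4 : 4 ^ l % 3 = 1 % 3 := by
    have : (4:ℕ) ^ l ≡ 1 ^ l [MOD 3] := Nat.ModEq.pow l (by decide)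
    simpa [Nat.ModEq] using this
  have h2 : 2 ^ (2 * l + 1) = 2 * 4 ^ l := by
    rw [pow_succ, pow_mul]; ring
  have hpos : 1 ≤ 4 ^ l := Nat.one_le_pow _ _ (by norm_num)
  rintro ⟨k, hk⟩
  rw [h2] at hk
  omega

lemma cube_inj {K : Type} [Field K] [Fintype K] [DecidableEq K] {m : ℕ} (hodd : Odd m)
    (hK : Fintype.card K = 2 ^ m) : Function.Injective (fun x : K => x ^ 3) := by
  have h3 : ¬ (3 ∣ Fintype.card Kˣ) := by
    rw [Fintype.card_units, hK]; exact not_three_dvd hodd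
  intro x y hxy
  simp only at hxy
  by_cases hy : y = 0
  · subst hy
    simpa [pow_eq_zero_iff] using hxy
  by_cases hx : x = 0
  · subst hx
    exact absurd hxy.symm (by simpa [pow_eq_zero_iff] using hy)
  have hu : (Units.mk0 x hx * (Units.mk0 y hy)⁻¹) ^ 3 = 1 := by
    ext
    push_cast
    field_simp
    rw [Units.val_mk0, Units.val_mk0, hxy, div_self (pow_ne_zero _ hy)]
  set u := Units.mk0 x hx * (Units.mk0 y hy)⁻¹ with hudef
  have hord : orderOf u ∣ 3 := orderOf_dvd_of_pow_eq_one hu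
  have hord2 : orderOf u ∣ Fintype.card Kˣ := orderOf_dvd_card
  have h1 : orderOf u = 1 := by
    rcases (Nat.dvd_prime (by norm_num)).mp hord with h | h
    · exact h
    · exact absurd (h ▸ hord2) h3
  have : u = 1 := orderOf_eq_one_iff.mp h1
  have hxy' : Units.mk0 x hx = Units.mk0 y hy := by
    rw [hudef] at this
    exact mul_inv_eq_one.mp this
  simpa using congrArg Units.val hxy'

lemma sum_mk {α M N : Type*} [AddCommMonoid M] [AddCommMonoid N] (s : Finset α)
    (f : α → M) (g : α → N) :
    ∑ i ∈ s, (f i, g i) = (∑ i ∈ s, f i, ∑ i ∈ s, g i) := by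
  refine Prod.ext ?_ ?_ <;> simp [Prod.fst_sum, Prod.snd_sum]

lemma sum_mk5 {α M1 M2 M3 M4 M5 : Type*} [AddCommMonoid M1] [AddCommMonoid M2]
    [AddCommMonoid M3] [AddCommMonoid M4] [AddCommMonoid M5] (s : Finset α)
    (f1 : α → M1) (f2 : α → M2) (f3 : α → M3) (f4 : α → M4) (f5 : α → M5) :
    ∑ i ∈ s, (f1 i, f2 i, f3 i, f4 i, f5 i)
      = (∑ i ∈ s, f1 i, ∑ i ∈ s, f2 i, ∑ i ∈ s, f3 i, ∑ i ∈ s, f4 i, ∑ i ∈ s, f5 i) := by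
  rw [sum_mk, sum_mk, sum_mk, sum_mk]

lemma assemble {r0 n0 n' : ℕ} {K : Type} [Field K]
    (h : Fin n0 → (Fin r0 → ZMod 2)) (β : Fin n0 → K) (h' : Fin n' → K × K)
    (s : Fin r0 → ZMod 2) (a b c d : K)
    (TA : Finset (Fin n0 × K)) (TB : Finset (Fin n')) (TC : Finset {w : K // w ≠ 0})
    (hcard : TA.card + TB.card + TC.card ≤ 4)
    (h1 : ∑ x ∈ TA, h x.1 = s)
    (h2 : ∑ x ∈ TA, x.2 = a)
    (h3 : ∑ x ∈ TA, β x.1 * x.2 + ∑ j ∈ TB, (h' j).1 = b)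
    (h4 : ∑ x ∈ TA, β x.1 ^ 2 * x.2 + ∑ j ∈ TB, (h' j).2 = c)
    (h5 : ∑ x ∈ TA, β x.1 ^ 3 * x.2 + ∑ w ∈ TC, (w : K) = d) :
    ∃ T : Finset ((Fin n0 × K) ⊕ (Fin n' ⊕ {w : K // w ≠ 0})),
      T.card ≤ 4 ∧
      (s, a, b, c, d) = ∑ i ∈ T, Sum.elim
            (fun jx : Fin n0 × K =>
              (h jx.1, jx.2, β jx.1 * jx.2, β jx.1 ^ 2 * jx.2, β jx.1 ^ 3 * jx.2))
            (Sum.elim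
              (fun j : Fin n' =>
                ((0 : Fin r0 → ZMod 2), (0 : K), (h' j).1, (h' j).2, (0 : K)))
              (fun w : {w : K // w ≠ 0} =>
                ((0 : Fin r0 → ZMod 2), (0 : K), (0 : K), (0 : K), (w : K)))) i := by
  refine ⟨TA.disjSum (TB.disjSum TC), ?_, ?_⟩
  · simp only [Finset.card_disjSum]; omega
  · rw [Finset.sum_disjSum, Finset.sum_disjSum]
    simp only [Sum.elim_inl, Sum.elim_inr]
    rw [sum_mk5 TA (fun x => h x.1) (fun x => x.2) (fun x => β x.1 * x.2)
        (fun x => β x.1 ^ 2 * x.2) (fun x => β x.1 ^ 3 * x.2),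
      sum_mk5 TB (fun _ => (0 : Fin r0 → ZMod 2)) (fun _ => (0:K)) (fun j => (h' j).1)
        (fun j => (h' j).2) (fun _ => (0:K)),
      sum_mk5 TC (fun _ => (0 : Fin r0 → ZMod 2)) (fun _ => (0:K)) (fun _ => (0:K))
        (fun _ => (0:K)) (fun w => (w : K))]
    simp only [Prod.mk_add_mk, Finset.sum_const_zero, add_zero, zero_add]
    rw [h1, h2, h3, h4, h5]


/-- Construction QM_4^4. From H₀ (columns h) with a
(4,1)-partition into p parts, m odd with 2^m − 1 ≥ p, an auxiliary matrix H'
(columns h' in F_2^{2m} ≅ K × K) of covering radius 2, nonzero indicators β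
distinct on distinct parts and D = D₅, one obtains an (r₀+4m)-row matrix with
2^m(n₀+1) + n' − 1 columns such that every vector of F_2^{r₀+4m} is a sum of
at most 4 of its columns. -/
theorem QM4_4_construction
    (r0 n0 n' p m : ℕ) (hodd : Odd m)
    (K : Type) [Field K] [Fintype K] [DecidableEq K] (hK : Fintype.card K = 2 ^ m)
    (h : Fin n0 → (Fin r0 → ZMod 2)) (col : Fin n0 → Fin p)
    (hcov : ∀ s : Fin r0 → ZMod 2, ∃ T : Finset (Fin n0),
        1 ≤ T.card ∧ T.card ≤ 4 ∧ Set.InjOn col ↑T ∧ s = ∑ j ∈ T, h j)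
    (h' : Fin n' → K × K)
    (h'cov : ∀ u : K × K, ∃ T : Finset (Fin n'), T.card ≤ 2 ∧ u = ∑ j ∈ T, h' j)
    (hp : p ≤ 2 ^ m - 1)
    (β : Fin n0 → K) (hβ0 : ∀ j, β j ≠ 0)
    (hβ : ∀ i j, col i ≠ col j → β i ≠ β j) :
    Fintype.card ((Fin n0 × K) ⊕ (Fin n' ⊕ {w : K // w ≠ 0}))
        = 2 ^ m * (n0 + 1) + n' - 1 ∧
    ∀ u : (Fin r0 → ZMod 2) × K × K × K × K,
      ∃ T : Finset ((Fin n0 × K) ⊕ (Fin n' ⊕ {w : K // w ≠ 0})),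
        T.card ≤ 4 ∧
        u = ∑ i ∈ T, Sum.elim
              (fun jx : Fin n0 × K =>
                (h jx.1, jx.2, β jx.1 * jx.2, β jx.1 ^ 2 * jx.2, β jx.1 ^ 3 * jx.2))
              (Sum.elim
                (fun j : Fin n' =>
                  ((0 : Fin r0 → ZMod 2), (0 : K), (h' j).1, (h' j).2, (0 : K)))
                (fun w : {w : K // w ≠ 0} =>
                  ((0 : Fin r0 → ZMod 2), (0 : K), (0 : K), (0 : K), (w : K)))) i := by
  classical
  constructor
  · have hsub : Fintype.card {w : K // w ≠ 0} = 2 ^ m - 1 := by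
      rw [← Fintype.card_congr (unitsEquivNeZero (G₀ := K)), Fintype.card_units, hK]
    simp only [Fintype.card_sum, Fintype.card_prod, Fintype.card_fin, hK, hsub]
    obtain ⟨q, hq⟩ : ∃ q, 2 ^ m = q + 1 :=
      ⟨2 ^ m - 1, by have := Nat.one_le_two_pow (n := m); omega⟩
    rw [hq]
    have h2 : (q + 1) * (n0 + 1) + n' - 1 = q * n0 + q + n0 + n' := by
      have h3 : (q + 1) * (n0 + 1) + n' = (q * n0 + q + n0 + n') + 1 := by ring
      rw [h3]; omega
    rw [h2, show q + 1 - 1 = q from by omega]; ring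
  rintro ⟨s, a, b, c, d⟩
  obtain ⟨T, hT1, hT4, hinj, hs⟩ := hcov s
  have hβT : Set.InjOn β ↑T := fun i hi j hj hij => by
    by_contra hne
    exact hβ i j (fun hc => hne (hinj hi hj hc)) hij
  have hcube : Function.Injective (fun x : K => x ^ 3) := cube_inj hodd hK
  have himg : ∀ ξ : Fin n0 → K, ∀ x ∈ T, ∀ y ∈ T, (x, ξ x) = (y, ξ y) → x = y :=
    fun ξ x _ y _ hxy => congrArg Prod.fst hxy
  have hcardimg : ∀ ξ : Fin n0 → K, (T.image fun j => (j, ξ j)).card = T.card :=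
    fun ξ => Finset.card_image_of_injOn fun x _ y _ hxy => congrArg Prod.fst hxy
  have hcases : T.card = 1 ∨ T.card = 2 ∨ T.card = 3 ∨ T.card = 4 := by omega
  rcases hcases with hc | hc | hc | hc
  · -- |T| = 1 : fix a with ξ, b,c with TB, d with TC
    obtain ⟨ξ, hξ⟩ := vdm_solve_finset T β hβT (fun _ => a)
    have e0 : ∑ j ∈ T, ξ j = a := by
      have := hξ ⟨0, by omega⟩; simpa using this
    obtain ⟨TB, hTB2, hTBs⟩ :=
      h'cov (b - ∑ j ∈ T, β j * ξ j, c - ∑ j ∈ T, β j ^ 2 * ξ j)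
    have hTB1 : ∑ j ∈ TB, (h' j).1 = b - ∑ j ∈ T, β j * ξ j := by
      have := congrArg Prod.fst hTBs; simpa [Prod.fst_sum] using this.symm
    have hTB2' : ∑ j ∈ TB, (h' j).2 = c - ∑ j ∈ T, β j ^ 2 * ξ j := by
      have := congrArg Prod.snd hTBs; simpa [Prod.snd_sum] using this.symm
    set δ : K := d - ∑ j ∈ T, β j ^ 3 * ξ j with hδ
    refine assemble h β h' s a b c d (T.image fun j => (j, ξ j)) TB
      (if hd : δ = 0 then ∅ else {⟨δ, hd⟩}) ?_ ?_ ?_ ?_ ?_ ?_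
    · have : (if hd : δ = 0 then (∅ : Finset {w : K // w ≠ 0}) else {⟨δ, hd⟩}).card ≤ 1 := by
        split <;> simp
      rw [hcardimg, hc]; omega
    · rw [Finset.sum_image (himg ξ)]; exact hs.symm
    · rw [Finset.sum_image (himg ξ)]; exact e0
    · rw [Finset.sum_image (himg ξ), hTB1]; ring
    · rw [Finset.sum_image (himg ξ), hTB2']; ring
    · rw [Finset.sum_image (himg ξ)]
      split
      · rename_i hd
        simp only [Finset.sum_empty, add_zero]
        exact (sub_eq_zero.mp (show d - ∑ j ∈ T, β j ^ 3 * ξ j = 0 from hd)).symm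
      · simp only [Finset.sum_singleton]
        ring
  · -- |T| = 2 : fix a,d with ξ (powers of β³), b,c with TB
    have hγT : Set.InjOn (fun j => β j ^ 3) ↑T := fun i hi j hj e =>
      hβT hi hj (hcube e)
    obtain ⟨ξ, hξ⟩ := vdm_solve_finset T (fun j => β j ^ 3) hγT
      (fun k => if (k : ℕ) = 0 then a else d)
    have e0 : ∑ j ∈ T, ξ j = a := by
      have := hξ ⟨0, by omega⟩; simpa using this
    have e3 : ∑ j ∈ T, β j ^ 3 * ξ j = d := by
      have h1 := hξ ⟨1, by omega⟩
      norm_num at h1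
      rw [← h1]; exact Finset.sum_congr rfl fun j _ => by ring
    obtain ⟨TB, hTB2, hTBs⟩ :=
      h'cov (b - ∑ j ∈ T, β j * ξ j, c - ∑ j ∈ T, β j ^ 2 * ξ j)
    have hTB1 : ∑ j ∈ TB, (h' j).1 = b - ∑ j ∈ T, β j * ξ j := by
      have := congrArg Prod.fst hTBs; simpa [Prod.fst_sum] using this.symm
    have hTB2' : ∑ j ∈ TB, (h' j).2 = c - ∑ j ∈ T, β j ^ 2 * ξ j := by
      have := congrArg Prod.snd hTBs; simpa [Prod.snd_sum] using this.symm
    refine assemble h β h' s a b c d (T.image fun j => (j, ξ j)) TB ∅ ?_ ?_ ?_ ?_ ?_ ?_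
    · rw [hcardimg, hc]; simp; omega
    · rw [Finset.sum_image (himg ξ)]; exact hs.symm
    · rw [Finset.sum_image (himg ξ)]; exact e0
    · rw [Finset.sum_image (himg ξ), hTB1]; ring
    · rw [Finset.sum_image (himg ξ), hTB2']; ring
    · rw [Finset.sum_image (himg ξ)]; simpa using e3
  · -- |T| = 3 : fix a,b,c with ξ, d with TC
    obtain ⟨ξ, hξ⟩ := vdm_solve_finset T β hβT
      (fun k => if (k : ℕ) = 0 then a else if (k : ℕ) = 1 then b else c)
    have e0 : ∑ j ∈ T, ξ j = a := by
      have := hξ ⟨0, by omega⟩; simpa using this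
    have e1 : ∑ j ∈ T, β j * ξ j = b := by
      have h1 := hξ ⟨1, by omega⟩
      norm_num at h1
      rw [← h1]; exact Finset.sum_congr rfl fun j _ => by ring
    have e2 : ∑ j ∈ T, β j ^ 2 * ξ j = c := by
      have h2 := hξ ⟨2, by omega⟩
      norm_num at h2
      rw [← h2]; exact Finset.sum_congr rfl fun j _ => by ring
    set δ : K := d - ∑ j ∈ T, β j ^ 3 * ξ j with hδ
    refine assemble h β h' s a b c d (T.image fun j => (j, ξ j)) ∅
      (if hd : δ = 0 then ∅ else {⟨δ, hd⟩}) ?_ ?_ ?_ ?_ ?_ ?_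
    · have : (if hd : δ = 0 then (∅ : Finset {w : K // w ≠ 0}) else {⟨δ, hd⟩}).card ≤ 1 := by
        split <;> simp
      rw [hcardimg, hc]; simp only [Finset.card_empty]; omega
    · rw [Finset.sum_image (himg ξ)]; exact hs.symm
    · rw [Finset.sum_image (himg ξ)]; exact e0
    · rw [Finset.sum_image (himg ξ)]; simpa using e1
    · rw [Finset.sum_image (himg ξ)]; simpa using e2
    · rw [Finset.sum_image (himg ξ)]
      split
      · rename_i hd
        simp only [Finset.sum_empty, add_zero]
        exact (sub_eq_zero.mp (show d - ∑ j ∈ T, β j ^ 3 * ξ j = 0 from hd)).symm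
      · simp only [Finset.sum_singleton]
        ring
  · -- |T| = 4 : fix a,b,c,d with ξ
    obtain ⟨ξ, hξ⟩ := vdm_solve_finset T β hβT
      (fun k => if (k : ℕ) = 0 then a else if (k : ℕ) = 1 then b
        else if (k : ℕ) = 2 then c else d)
    have e0 : ∑ j ∈ T, ξ j = a := by
      have := hξ ⟨0, by omega⟩; simpa using this
    have e1 : ∑ j ∈ T, β j * ξ j = b := by
      have h1 := hξ ⟨1, by omega⟩
      norm_num at h1
      rw [← h1]; exact Finset.sum_congr rfl fun j _ => by ring
    have e2 : ∑ j ∈ T, β j ^ 2 * ξ j = c := by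
      have h2 := hξ ⟨2, by omega⟩
      norm_num at h2
      rw [← h2]; exact Finset.sum_congr rfl fun j _ => by ring
    have e3 : ∑ j ∈ T, β j ^ 3 * ξ j = d := by
      have h3 := hξ ⟨3, by omega⟩
      norm_num at h3
      rw [← h3]; exact Finset.sum_congr rfl fun j _ => by ring
    refine assemble h β h' s a b c d (T.image fun j => (j, ξ j)) ∅ ∅ ?_ ?_ ?_ ?_ ?_ ?_
    · rw [hcardimg, hc]; simp
    · rw [Finset.sum_image (himg ξ)]; exact hs.symm
    · rw [Finset.sum_image (himg ξ)]; exact e0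
    · rw [Finset.sum_image (himg ξ)]; simpa using e1
    · rw [Finset.sum_image (himg ξ)]; simpa using e2
    · rw [Finset.sum_image (himg ξ)]; simpa using e3
end
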